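/- Fix 0 < y < 1 and s > 0. For every u with 0 ≤ u ≤ 1, one has min( ∫_u^∞ h((x−y)/s) dx, y, 1−u ) = ∫_u^1 f(s,x,y) dx, where f is the limiting density profile defined in the context. (Identity (10), the key computation in the proof of Theorem 4.3) -/

import Mathlib

open MeasureTheory

/-- The Rost hydrodynamic density profile `h(x) = min(1, max((1-x)/2, 0))`. -/
noncomputable def hRost (x : ℝ) : ℝ := min 1 (max ((1 - x) / 2) 0)

/-- `L_y^-(s) = y + s - 2√(sy)`. -/
noncomputable def Lminus (y s : ℝ) : ℝ := y + s - 2 * Real.sqrt (s * y)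

/-- `L_y^+(s) = y - s + 2√(s(1-y))`. -/
noncomputable def Lplus (y s : ℝ) : ℝ := y - s + 2 * Real.sqrt (s * (1 - y))

/-- `γ_y = 1 + 2√(y(1-y))`. -/
noncomputable def gamma' (y : ℝ) : ℝ := 1 + 2 * Real.sqrt (y * (1 - y))

open Classical in
/-- The limiting density profile `f(s, x, y)` of Theorem 4.3 (defined for a.e. `x`;
the cases below are almost everywhere exhaustive and disjoint, and we set `f := 0`
outside them). -/
noncomputable def fProfile (s x y : ℝ) : ℝ :=
  if max (y - s) (Lminus y s) < x ∧ x < min (y + s) (Lplus y s) then (s + y - x) / (2 * s)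
  else if 0 < x ∧ x < y - s then 1
  else if y + s < x ∧ x < 1 then 0
  else if 1 - y < s ∧ max (1 - y) (Lplus y s) < x ∧ x < 1 then 1
  else if y < s ∧ 0 < x ∧ x < min (1 - y) (Lminus y s) then 0
  else 0

section RostAux
open Set

noncomputable def Fclosed (y s u : ℝ) : ℝ :=
  (max 0 (min (2*s) (y + s - u)))^2 / (4*s) + max 0 (y - s - u)

lemma Fclosed_continuous (y s : ℝ) : Continuous (Fclosed y s) := by
  unfold Fclosed; fun_prop

lemma hRost_continuous : Continuous hRost := by unfold hRost; fun_prop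

lemma integral_hRost (y s : ℝ) (hs : 0 < s) (u : ℝ) :
    ∫ x in Set.Ioi u, hRost ((x - y) / s) = Fclosed y s u := by
  set φ : ℝ → ℝ := fun x => hRost ((x - y) / s) with hφ
  have hφc : Continuous φ := hRost_continuous.comp (by fun_prop)
  set a := max u (y - s) with ha
  set b := max u (y + s) with hb
  have hub : u ≤ b := le_max_left _ _
  have hua : u ≤ a := le_max_left _ _
  have hab : a ≤ b := max_le_max le_rfl (by linarith)
  -- φ vanishes on Ioi b
  have hzero : ∀ x ∈ Set.Ioi b, φ x = 0 := by
    intro x hx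
    have hx' : y + s < x := lt_of_le_of_lt (le_max_right _ _) hx
    have h1 : (1 : ℝ) ≤ (x - y)/s := by
      rw [le_div_iff₀ hs]; linarith
    have : (1 - (x - y)/s)/2 ≤ 0 := by linarith
    simp only [hφ, hRost, max_eq_right this, min_eq_right (by norm_num : (0:ℝ) ≤ 1)]
  have hsplit : Set.Ioi u = Set.Ioc u b ∪ Set.Ioi b := (Set.Ioc_union_Ioi_eq_Ioi hub).symm
  rw [hsplit, MeasureTheory.setIntegral_union (Set.Ioc_disjoint_Ioi le_rfl) measurableSet_Ioi
    (hφc.integrableOn_Ioc) ?_]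
  · rw [MeasureTheory.setIntegral_congr_fun measurableSet_Ioi hzero]
    simp only [integral_zero, add_zero]
    rw [← intervalIntegral.integral_of_le hub]
    rw [← intervalIntegral.integral_add_adjacent_intervals (a := u) (b := a) (c := b)
      (hφc.intervalIntegrable u a) (hφc.intervalIntegrable a b)]
    have h1 : ∫ x in u..a, φ x = a - u := by
      rcases le_or_gt (y - s) u with h | h
      · have : a = u := by rw [ha, max_eq_left h]
        rw [this, intervalIntegral.integral_same]; ring
      · have haeq : a = y - s := by rw [ha, max_eq_right h.le]
        have : ∀ x ∈ Set.uIcc u a, φ x = 1 := by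
          intro x hx
          rw [Set.uIcc_of_le hua] at hx
          have hxa : x ≤ y - s := haeq ▸ hx.2
          have : (x - y)/s ≤ -1 := by rw [div_le_iff₀ hs]; linarith
          have h2 : (1:ℝ) ≤ (1 - (x - y)/s)/2 := by linarith
          simp only [hφ, hRost]
          rw [max_eq_left (by linarith : (0:ℝ) ≤ (1 - (x-y)/s)/2), min_eq_left h2]
        rw [intervalIntegral.integral_congr this]
        simp
    have h2 : ∫ x in a..b, φ x = ((s+y)*(b-a) - (b^2-a^2)/2)/(2*s) := by
      rcases le_or_gt (y + s) u with h | h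
      · have hbu : b = u := by rw [hb, max_eq_left h]
        have hau : a = u := by rw [ha, max_eq_left (by linarith)]
        rw [hbu, hau, intervalIntegral.integral_same]; ring
      · have hbeq : b = y + s := by rw [hb, max_eq_right h.le]
        have haub : a ≤ y + s := by
          rw [ha]; exact max_le h.le (by linarith)
        have hage : y - s ≤ a := le_max_right _ _
        have heq : ∀ x ∈ Set.uIcc a b, φ x = (s + y - x)/(2*s) := by
          intro x hx
          rw [Set.uIcc_of_le hab] at hx
          have hx1 : y - s ≤ x := le_trans hage hx.1
          have hx2 : x ≤ y + s := hbeq ▸ hx.2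
          have hz1 : (x - y)/s ≤ 1 := by rw [div_le_one hs]; linarith
          have hz2 : -1 ≤ (x - y)/s := by rw [le_div_iff₀ hs]; linarith
          simp only [hφ, hRost]
          rw [max_eq_left (by linarith : (0:ℝ) ≤ (1 - (x-y)/s)/2),
            min_eq_right (by linarith : (1 - (x-y)/s)/2 ≤ 1)]
          field_simp
          ring
        rw [intervalIntegral.integral_congr heq]
        have : ∫ x in a..b, (s + y - x)/(2*s) = (∫ x in a..b, (s + y - x))/(2*s) :=
          intervalIntegral.integral_div _ _
        rw [this, intervalIntegral.integral_sub (intervalIntegrable_const)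
          intervalIntegral.intervalIntegrable_id,
          intervalIntegral.integral_const, integral_id, smul_eq_mul]
        field_simp
    rw [h1, h2]
    -- now case analysis to match Fclosed
    rcases le_or_gt u (y - s) with h1' | h1'
    · have haeq : a = y - s := max_eq_right h1'
      have hbeq : b = y + s := max_eq_right (by linarith)
      have hm : min (2*s) (y + s - u) = 2*s := min_eq_left (by linarith)
      rw [Fclosed, hm, max_eq_right (by linarith : (0:ℝ) ≤ 2*s),
        max_eq_right (by linarith : (0:ℝ) ≤ y - s - u), haeq, hbeq]
      field_simp
      ring
    · rcases le_or_gt u (y + s) with h2' | h2'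
      · have haeq : a = u := max_eq_left (by linarith)
        have hbeq : b = y + s := max_eq_right h2'
        have hm : min (2*s) (y + s - u) = y + s - u := min_eq_right (by linarith)
        rw [Fclosed, hm, max_eq_right (by linarith : (0:ℝ) ≤ y + s - u),
          max_eq_left (by linarith : y - s - u ≤ 0), haeq, hbeq]
        field_simp
        ring
      · have haeq : a = u := max_eq_left (by linarith)
        have hbeq : b = u := max_eq_left (by linarith)
        have hm : max 0 (min (2*s) (y + s - u)) = 0 := max_eq_left (by
          apply min_le_of_right_le; linarith)
        rw [Fclosed, hm, max_eq_left (by linarith : y - s - u ≤ 0), haeq, hbeq]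
        norm_num
  · apply MeasureTheory.IntegrableOn.congr_fun (MeasureTheory.integrableOn_zero)
      (fun x hx => (hzero x hx).symm) measurableSet_Ioi

lemma Fc_eq_quad {y s : ℝ} (hs : 0 < s) {v : ℝ} (h1 : y - s ≤ v) (h2 : v ≤ y + s) :
    Fclosed y s v = (y + s - v)^2 / (4*s) := by
  rw [Fclosed, min_eq_right (by linarith), max_eq_right (by linarith),
    max_eq_left (by linarith), add_zero]

lemma Fc_eq_lin {y s : ℝ} (hs : 0 < s) {v : ℝ} (h1 : v ≤ y - s) :
    Fclosed y s v = y - v := by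
  rw [Fclosed, min_eq_left (by linarith), max_eq_right (by linarith),
    max_eq_right (by linarith)]
  field_simp
  ring

lemma Fc_eq_zero {y s : ℝ} (hs : 0 < s) {v : ℝ} (h1 : y + s ≤ v) :
    Fclosed y s v = 0 := by
  rw [Fclosed, max_eq_left (min_le_of_right_le (by linarith)),
    max_eq_left (by linarith)]
  norm_num

set_option maxHeartbeats 1000000 in
lemma G_hasDerivAt (y s : ℝ) (hy0 : 0 < y) (hy1 : y < 1) (hs : 0 < s) {x : ℝ}
    (hx0 : 0 < x) (hx1 : x < 1) (hne1 : x ≠ y - s) (hne2 : x ≠ y + s)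
    (hne3 : x ≠ Lminus y s) (hne4 : x ≠ Lplus y s) (hne5 : x ≠ 1 - y) :
    HasDerivAt (fun v => min (Fclosed y s v) (min y (1 - v))) (-(fProfile s x y)) x := by
  have hr0 : 0 ≤ Real.sqrt (s*y) := Real.sqrt_nonneg _
  have hr2 : Real.sqrt (s*y)^2 = s*y := Real.sq_sqrt (by positivity)
  have ht0 : 0 ≤ Real.sqrt (s*(1-y)) := Real.sqrt_nonneg _
  have ht2 : Real.sqrt (s*(1-y))^2 = s*(1-y) := Real.sq_sqrt (mul_nonneg hs.le (by linarith))
  set r := Real.sqrt (s*y) with hrdef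
  set t := Real.sqrt (s*(1-y)) with htdef
  have hLm : Lminus y s = y + s - 2*r := rfl
  have hLp : Lplus y s = y - s + 2*t := rfl
  have key : ∀ {c1 c2 : ℝ} {g : ℝ → ℝ} {d : ℝ}, c1 < x → x < c2 →
      (∀ v ∈ Set.Ioo c1 c2, min (Fclosed y s v) (min y (1 - v)) = g v) →
      HasDerivAt g d x →
      HasDerivAt (fun v => min (Fclosed y s v) (min y (1 - v))) d x := by
    intro c1 c2 g d hc1 hc2 hEq hg
    exact hg.congr_of_eventuallyEq
      (Filter.eventuallyEq_of_mem (Ioo_mem_nhds hc1 hc2) hEq)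
  have hquad : ∀ z : ℝ, HasDerivAt (fun v => (y + s - v)^2/(4*s))
      (-((s + y - z)/(2*s))) z := by
    intro z
    have h1 : HasDerivAt (fun v : ℝ => y + s - v) (-1) z := (hasDerivAt_id z).const_sub _
    have h2 := (h1.pow 2).div_const (4*s)
    refine h2.congr_deriv ?_
    field_simp
    ring
  unfold fProfile
  split_ifs with h1 h2 h3 h4 h5
  · -- linear (rarefaction) region
    obtain ⟨ha, hb⟩ := h1
    refine key ha hb (fun v hv => ?_) (hquad x)
    obtain ⟨hva, hvb⟩ := hv
    have hv1 : y - s < v := lt_of_le_of_lt (le_max_left _ _) hva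
    have hv2 : v < y + s := lt_of_lt_of_le hvb (min_le_left _ _)
    have hvL1 : Lminus y s < v := lt_of_le_of_lt (le_max_right _ _) hva
    have hvL2 : v < Lplus y s := lt_of_lt_of_le hvb (min_le_right _ _)
    rw [hLm] at hvL1; rw [hLp] at hvL2
    rw [Fc_eq_quad hs hv1.le hv2.le]
    have hlty : (y + s - v)^2/(4*s) < y := by
      rw [div_lt_iff₀ (by linarith)]
      nlinarith
    have hlt1v : (y + s - v)^2/(4*s) < 1 - v := by
      rw [div_lt_iff₀ (by linarith)]
      nlinarith [mul_pos (show (0:ℝ) < v - y + s + 2*t by linarith)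
        (show (0:ℝ) < y - s + 2*t - v by linarith)]
    exact min_eq_left (le_min hlty.le hlt1v.le)
  · -- f = 1 on (0, y - s)
    refine key (g := fun v => y - v) h2.1 h2.2 (fun v hv => ?_) ?_
    · obtain ⟨hva, hvb⟩ := hv
      rw [Fc_eq_lin hs hvb.le]
      exact min_eq_left (le_min (by linarith) (by linarith))
    · exact (hasDerivAt_id x).const_sub y
  · -- f = 0 on (y+s, 1)
    refine key (g := fun _ => (0:ℝ)) h3.1 h3.2 (fun v hv => ?_) ?_
    · obtain ⟨hva, hvb⟩ := hv
      rw [Fc_eq_zero hs hva.le]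
      exact min_eq_left (le_min (by linarith) (by linarith))
    · exact (hasDerivAt_const x (0:ℝ)).congr_deriv (by norm_num)
  · -- f = 1 on (max (1-y) L⁺, 1), s > 1 - y
    obtain ⟨hsy, hma, hmb⟩ := h4
    have hxb : x < y + s := by
      rcases lt_or_ge x (y+s) with h | h
      · exact h
      · exact absurd ⟨lt_of_le_of_ne h (Ne.symm hne2), hx1⟩ h3
    refine key (g := fun v => 1 - v) hma hxb (fun v hv => ?_) ?_
    · obtain ⟨hva, hvb⟩ := hv
      have hv1y : 1 - y < v := lt_of_le_of_lt (le_max_left _ _) hva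
      have hvL : Lplus y s < v := lt_of_le_of_lt (le_max_right _ _) hva
      rw [hLp] at hvL
      have hv1 : y - s < v := by linarith
      rw [Fc_eq_quad hs hv1.le hvb.le]
      have hgt : 1 - v ≤ (y + s - v)^2/(4*s) := by
        rw [le_div_iff₀ (by linarith)]
        nlinarith [mul_nonneg (show (0:ℝ) ≤ v - y + s - 2*t by linarith)
          (show (0:ℝ) ≤ v - y + s + 2*t by linarith)]
      rw [min_eq_right (by linarith : 1 - v ≤ y), min_eq_right hgt]
    · exact (hasDerivAt_id x).const_sub 1
  · -- f = 0 on (0, min (1-y) L⁻), s > y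
    obtain ⟨hsy, hxa, hxb⟩ := h5
    refine key (g := fun _ => y) hxa hxb (fun v hv => ?_) ?_
    · obtain ⟨hva, hvb⟩ := hv
      have hv1y : v < 1 - y := lt_of_lt_of_le hvb (min_le_left _ _)
      have hvL : v < Lminus y s := lt_of_lt_of_le hvb (min_le_right _ _)
      rw [hLm] at hvL
      have hv2 : v < y + s := by linarith
      have hv1 : y - s < v := by linarith
      rw [Fc_eq_quad hs hv1.le hv2.le]
      have hgt : y ≤ (y + s - v)^2/(4*s) := by
        rw [le_div_iff₀ (by linarith)]
        nlinarith
      rw [min_eq_left (by linarith : y ≤ 1 - v), min_eq_right hgt]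
    · exact (hasDerivAt_const x y).congr_deriv (by norm_num)
  · -- else branch: impossible
    exfalso
    have hxgt : y - s < x := by
      rcases lt_or_ge x (y - s) with h | h
      · exact absurd ⟨hx0, h⟩ h2
      · exact lt_of_le_of_ne h (Ne.symm hne1)
    have hxlt : x < y + s := by
      rcases lt_or_ge x (y + s) with h | h
      · exact h
      · exact absurd ⟨lt_of_le_of_ne h (Ne.symm hne2), hx1⟩ h3
    -- sqrt decomposition
    have hs0 : (0:ℝ) ≤ s := hs.le
    set a := Real.sqrt s with hadef
    set b := Real.sqrt y with hbdef
    set c := Real.sqrt (1-y) with hcdef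
    have ha2 : a^2 = s := Real.sq_sqrt hs0
    have hb2 : b^2 = y := Real.sq_sqrt hy0.le
    have hc2 : c^2 = 1 - y := Real.sq_sqrt (by linarith)
    have ha0 : 0 < a := Real.sqrt_pos.mpr hs
    have hb0 : 0 < b := Real.sqrt_pos.mpr hy0
    have hc0 : 0 < c := Real.sqrt_pos.mpr (by linarith)
    have hrab : Real.sqrt (s*y) = a * b := Real.sqrt_mul hs0 y
    have htac : Real.sqrt (s*(1-y)) = a * c := Real.sqrt_mul hs0 (1-y)
    have hLm' : Lminus y s = y + s - 2*(a*b) := by rw [Lminus, hrab]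
    have hLp' : Lplus y s = y - s + 2*(a*c) := by rw [Lplus, htac]
    have haa : a * a = s := by rw [← pow_two]; exact ha2
    have hbb : b * b = y := by rw [← pow_two]; exact hb2
    have hcc : c * c = 1 - y := by rw [← pow_two]; exact hc2
    clear key hquad hLm hLp hr0 hr2 ht0 ht2 ha2 hb2 hc2
    rcases lt_or_ge (max (y-s) (Lminus y s)) x with hmx | hmx
    · -- then x ≥ min (y+s) (Lplus y s), so x > Lplus
      have hxm : min (y + s) (Lplus y s) ≤ x := by
        by_contra hcon
        exact h1 ⟨hmx, lt_of_not_ge hcon⟩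
      have hxLp : Lplus y s < x := by
        rcases min_le_iff.mp hxm with h | h
        · linarith
        · exact lt_of_le_of_ne h (Ne.symm hne4)
      rw [hLp'] at hxLp
      have hca : a*c < a*a := by linarith
      have hac : c < a := lt_of_mul_lt_mul_left hca ha0.le
      have hs1y : 1 - y < s := by
        have h' : c*c < a*a := mul_lt_mul' hac.le hac hc0.le ha0
        linarith
      have hxle : x ≤ max (1-y) (Lplus y s) := le_of_not_gt (fun hc' => h4 ⟨hs1y, hc', hx1⟩)
      have hx1y : x < 1 - y := by
        rcases le_max_iff.mp hxle with h | h
        · exact lt_of_le_of_ne h hne5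
        · exfalso; rw [hLp'] at h; linarith
      have hsq : b*b < a*a - 2*(a*c) + c*c := by linarith
      have hsq' : b^2 < (a-c)^2 := by
        rw [show (a-c)^2 = a*a - 2*(a*c) + c*c from by ring, show b^2 = b*b from by ring]
        exact hsq
      have habc : b < a - c := lt_of_pow_lt_pow_left₀ 2 (by linarith) hsq'
      have hsy : y < s := by
        have h' : b*b < a*a := mul_lt_mul' (by linarith) (by linarith) hb0.le ha0
        linarith
      have hxLm : x < Lminus y s := by
        rw [hLm']
        have hacb : c < a - b := by linarith
        have h' : c*c < (a-b)*(a-b) := mul_lt_mul' hacb.le hacb hc0.le (by linarith)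
        have hexp : (a-b)*(a-b) = a*a - 2*(a*b) + b*b := by ring
        linarith
      exact h5 ⟨hsy, hx0, lt_min (by linarith) hxLm⟩
    · have hxLm : x < Lminus y s := by
        rcases le_max_iff.mp hmx with h | h
        · exfalso; linarith
        · exact lt_of_le_of_ne h hne3
      rw [hLm'] at hxLm
      have hba : a*b < a*a := by linarith
      have hab : b < a := lt_of_mul_lt_mul_left hba ha0.le
      have hsy : y < s := by
        have h' : b*b < a*a := mul_lt_mul' hab.le hab hb0.le ha0
        linarith
      have hxge : min (1-y) (Lminus y s) ≤ x := le_of_not_gt (fun hc' => h5 ⟨hsy, hx0, hc'⟩)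
      have hx1y : 1 - y < x := by
        rcases min_le_iff.mp hxge with h | h
        · exact lt_of_le_of_ne h (Ne.symm hne5)
        · exfalso; rw [hLm'] at h; linarith
      have hsq : c*c < a*a - 2*(a*b) + b*b := by linarith
      have hsq' : c^2 < (a-b)^2 := by
        rw [show (a-b)^2 = a*a - 2*(a*b) + b*b from by ring, show c^2 = c*c from by ring]
        exact hsq
      have hacb : c < a - b := lt_of_pow_lt_pow_left₀ 2 (by linarith) hsq'
      have hs1y : 1 - y < s := by
        have h' : c*c < a*a := mul_lt_mul' (by linarith) (by linarith) hc0.le ha0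
        linarith
      have hxLp : Lplus y s < x := by
        rw [hLp']
        have habc : b < a - c := by linarith
        have h' : b*b < (a-c)*(a-c) := mul_lt_mul' habc.le habc hb0.le (by linarith)
        have hexp : (a-c)*(a-c) = a*a - 2*(a*c) + c*c := by ring
        linarith
      exact h4 ⟨hs1y, max_lt (by linarith) hxLp, hx1⟩

lemma fProfile_measurable (y s : ℝ) : Measurable (fun x => fProfile s x y) := by
  unfold fProfile
  refine Measurable.ite measurableSet_Ioo (by fun_prop) ?_
  refine Measurable.ite measurableSet_Ioo measurable_const ?_
  refine Measurable.ite measurableSet_Ioo measurable_const ?_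
  refine Measurable.ite (MeasurableSet.inter (MeasurableSet.const _) measurableSet_Ioo)
    measurable_const ?_
  exact Measurable.ite (MeasurableSet.inter (MeasurableSet.const _)
    (MeasurableSet.inter measurableSet_Ioi measurableSet_Iio)) measurable_const measurable_const

lemma fProfile_bound (y s : ℝ) (hs : 0 < s) (x : ℝ) : ‖fProfile s x y‖ ≤ 1 := by
  rw [Real.norm_eq_abs]
  unfold fProfile
  split_ifs with h1 h2 h3 h4 h5 <;> try norm_num
  obtain ⟨ha, hb⟩ := h1
  have hx1 : y - s < x := lt_of_le_of_lt (le_max_left _ _) ha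
  have hx2 : x < y + s := lt_of_lt_of_le hb (min_le_left _ _)
  rw [abs_of_nonneg (by apply div_nonneg <;> linarith)]
  rw [div_le_one (by linarith)]
  linarith

end RostAux

/-- Identity (10) in the proof of Theorem 4.3: for `0 < y < 1`, `s > 0` and
`0 ≤ u ≤ 1`, `min(∫_u^∞ h((x-y)/s) dx, y, 1-u) = ∫_u^1 f(s, x, y) dx`. -/
theorem F_eq_integral_f (y s u : ℝ) (hy0 : 0 < y) (hy1 : y < 1) (hs : 0 < s)
    (hu0 : 0 ≤ u) (hu1 : u ≤ 1) :
    min (∫ x in Set.Ioi u, hRost ((x - y) / s)) (min y (1 - u))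
      = ∫ x in u..1, fProfile s x y := by
  rw [integral_hRost y s hs u]
  set G : ℝ → ℝ := fun v => min (Fclosed y s v) (min y (1 - v)) with hG
  have hcont : ContinuousOn G (Set.Icc u 1) :=
    ((Fclosed_continuous y s).min (continuous_const.min (by fun_prop))).continuousOn
  set S : Set ℝ := {y-s, y+s, Lminus y s, Lplus y s, 1-y} with hSdef
  have hScount : S.Countable := (Set.toFinite _).countable
  have hderiv : ∀ x ∈ Set.Ioo u 1 \ S, HasDerivAt G (-(fProfile s x y)) x := by
    rintro x ⟨hx, hxS⟩
    simp only [hSdef, Set.mem_insert_iff, Set.mem_singleton_iff, not_or] at hxS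
    exact G_hasDerivAt y s hy0 hy1 hs (lt_of_le_of_lt hu0 hx.1) hx.2
      hxS.1 hxS.2.1 hxS.2.2.1 hxS.2.2.2.1 hxS.2.2.2.2
  have hint : IntervalIntegrable (fun x => fProfile s x y) volume u 1 := by
    apply IntervalIntegrable.mono_fun' (g := fun _ => (1:ℝ)) intervalIntegrable_const
    · exact (fProfile_measurable y s).aestronglyMeasurable
    · exact Filter.Eventually.of_forall (fun x => fProfile_bound y s hs x)
  have hftc := MeasureTheory.integral_eq_of_hasDerivAt_off_countable_of_le G
    (fun x => -(fProfile s x y)) hu1 hScount hcont hderiv hint.neg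
  rw [intervalIntegral.integral_neg] at hftc
  have hG1 : G 1 = 0 := by
    have h1 : min y (1 - (1:ℝ)) = 0 := by rw [sub_self]; exact min_eq_right hy0.le
    have h2 : 0 ≤ Fclosed y s 1 := by unfold Fclosed; positivity
    simp only [hG]
    rw [sub_self, min_eq_right hy0.le, min_eq_right h2]
  have : ∫ x in u..1, fProfile s x y = G u := by
    rw [hG1] at hftc; linarith
  rw [this]
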